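/- Potential-based shaping preserves optimal policies: if the reward is modified to r'(s,a,s') = r(s,a,s') + γΦ(s') − Φ(s) for a potential Φ : S → ℝ, then the optimal Q-functions satisfy q'*(s,a) = q*(s,a) − Φ(s) for all (s,a), and hence the shaped MDP has the same set of optimal greedy actions at every state. -/

import Mathlib

private lemma abs_ciSup_sub_ciSup_le {A : Type*} [Fintype A] [Nonempty A]
    (f g : A → ℝ) (M : ℝ) (h : ∀ a, |f a - g a| ≤ M) :
    |(⨆ a, f a) - ⨆ a, g a| ≤ M := by
  have hbf : BddAbove (Set.range f) := (Set.finite_range f).bddAbove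
  have hbg : BddAbove (Set.range g) := (Set.finite_range g).bddAbove
  rw [abs_le]
  constructor
  · have : (⨆ a, g a) ≤ (⨆ a, f a) + M := by
      refine ciSup_le fun a => ?_
      have := (abs_le.mp (h a)).1
      have hfa : f a ≤ ⨆ a, f a := le_ciSup hbf a
      linarith
    linarith
  · have : (⨆ a, f a) ≤ (⨆ a, g a) + M := by
      refine ciSup_le fun a => ?_
      have := (abs_le.mp (h a)).2
      have hga : g a ≤ ⨆ a, g a := le_ciSup hbg a
      linarith
    linarith

/-- Potential-based reward shaping: the shaped optimal Q-function differs from the original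
by the potential, q'*(s,a) = q*(s,a) − Φ(s), hence the greedy (optimal) action sets agree. -/
theorem potential_shaping_preserves_optimal_policy {S A : Type*} [Fintype S] [Fintype A]
    [Nonempty S] [Nonempty A]
    (r : S × A → ℝ) (P : S × A → S → ℝ)
    (hP0 : ∀ z s', 0 ≤ P z s') (hP1 : ∀ z, ∑ s', P z s' = 1)
    (γ : ℝ) (hγ0 : 0 ≤ γ) (hγ1 : γ < 1)
    (Φ : S → ℝ)
    (r' : S × A → ℝ)
    (hr' : ∀ z : S × A, r' z = r z + γ * (∑ s', P z s' * Φ s') - Φ z.1)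
    (qstar q'star : S × A → ℝ)
    (hq : ∀ z : S × A, qstar z = r z + γ * ∑ s', P z s' * (⨆ a', qstar (s', a')))
    (hq' : ∀ z : S × A, q'star z = r' z + γ * ∑ s', P z s' * (⨆ a', q'star (s', a'))) :
    (∀ z : S × A, q'star z = qstar z - Φ z.1) ∧
      (∀ s, {a : A | ∀ b, q'star (s, b) ≤ q'star (s, a)}
            = {a : A | ∀ b, qstar (s, b) ≤ qstar (s, a)}) := by
  set D : S × A → ℝ := fun z => q'star z - qstar z + Φ z.1 with hDdef
  set M : ℝ := Finset.univ.sup' Finset.univ_nonempty (fun z : S × A => |D z|) with hMdef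
  have hMle : ∀ z : S × A, |D z| ≤ M := fun z =>
    Finset.le_sup' (fun z : S × A => |D z|) (Finset.mem_univ z)
  -- Each E s' := Φ s' + sup q' - sup q is bounded by M
  have hE : ∀ s' : S, |Φ s' + (⨆ a', q'star (s', a')) - ⨆ a', qstar (s', a')| ≤ M := by
    intro s'
    have hsub : (⨆ a', (qstar (s', a') - Φ s')) = (⨆ a', qstar (s', a')) - Φ s' := by
      have hb : BddAbove (Set.range fun a' => qstar (s', a')) :=
        (Set.finite_range _).bddAbove
      rw [← ciSup_sub hb (Φ s')]
    have key : |(⨆ a', q'star (s', a')) - ⨆ a', (qstar (s', a') - Φ s')| ≤ M := by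
      refine abs_ciSup_sub_ciSup_le _ _ M fun a => ?_
      have : q'star (s', a) - (qstar (s', a) - Φ s') = D (s', a) := by
        simp [hDdef]; ring
      rw [this]; exact hMle _
    rw [hsub] at key
    convert key using 2
    ring
  -- the contraction step
  have hDγ : ∀ z : S × A, |D z| ≤ γ * M := by
    intro z
    have hDz : D z = γ * ∑ s', P z s' *
        (Φ s' + (⨆ a', q'star (s', a')) - ⨆ a', qstar (s', a')) := by
      have h1 := hq z
      have h2 := hq' z
      have h3 := hr' z
      simp only [hDdef]
      rw [h1, h2, h3]
      rw [Finset.mul_sum, Finset.mul_sum, Finset.mul_sum, Finset.mul_sum]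
      have hsplit : ∑ s', γ * (P z s' *
          (Φ s' + (⨆ a', q'star (s', a')) - ⨆ a', qstar (s', a')))
          = (∑ s', γ * (P z s' * Φ s')) + (∑ s', γ * (P z s' * (⨆ a', q'star (s', a'))))
            - ∑ s', γ * (P z s' * (⨆ a', qstar (s', a'))) := by
        rw [← Finset.sum_add_distrib, ← Finset.sum_sub_distrib]
        exact Finset.sum_congr rfl fun s' _ => by ring
      rw [hsplit]
      ring
    rw [hDz, abs_mul, abs_of_nonneg hγ0]
    refine mul_le_mul_of_nonneg_left ?_ hγ0
    calc |∑ s', P z s' * (Φ s' + (⨆ a', q'star (s', a')) - ⨆ a', qstar (s', a'))|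
        ≤ ∑ s', |P z s' * (Φ s' + (⨆ a', q'star (s', a')) - ⨆ a', qstar (s', a'))| :=
          Finset.abs_sum_le_sum_abs _ _
      _ ≤ ∑ s', P z s' * M := by
          refine Finset.sum_le_sum fun s' _ => ?_
          rw [abs_mul, abs_of_nonneg (hP0 z s')]
          exact mul_le_mul_of_nonneg_left (hE s') (hP0 z s')
      _ = M := by rw [← Finset.sum_mul, hP1 z, one_mul]
  -- M ≤ γ M hence M = 0
  have hM0 : M ≤ 0 := by
    obtain ⟨z0, _, hz0⟩ := Finset.exists_mem_eq_sup' Finset.univ_nonempty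
      (fun z : S × A => |D z|)
    have hMz : M = |D z0| := by rw [hMdef, hz0]
    nlinarith [hDγ z0, abs_nonneg (D z0), hMz]
  have hDzero : ∀ z : S × A, D z = 0 := fun z =>
    abs_nonpos_iff.mp ((hMle z).trans hM0)
  have hfirst : ∀ z : S × A, q'star z = qstar z - Φ z.1 := by
    intro z
    have := hDzero z
    simp only [hDdef] at this
    linarith
  refine ⟨hfirst, fun s => ?_⟩
  ext a
  simp only [Set.mem_setOf_eq, hfirst (s, a), hfirst (s, _)]
  constructor <;> intro h b <;> have := h b <;>
    linarith
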